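/- If a state ρ can be transformed to a state σ by a U(1)-covariant channel, then Modes(σ) ⊆ Modes(ρ), where Modes(ρ) is the set of integers k for which the mode-k component ρ^(k) is nonzero. -/

import Mathlib

open Complex Matrix MeasureTheory
open scoped ComplexOrder

/-- The unitary representation of U(1) on a finite-dimensional Hilbert space with
orthonormal basis indexed by `ι`, where basis vector `i` carries integer charge `c i`:
`U(θ) = Σ_n e^{inθ} Π_n`. -/
noncomputable def Urep {ι : Type*} [Fintype ι] [DecidableEq ι] (c : ι → ℤ) (θ : ℝ) :
    Matrix ι ι ℂ :=
  Matrix.diagonal fun i => Complex.exp (Complex.I * (c i : ℂ) * (θ : ℂ))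

/-- The mode-`k` component of an operator: `A^(k) = Σ_n Π_{n+k} A Π_n`. -/
def modeComp {ι : Type*} [Fintype ι] [DecidableEq ι] (c : ι → ℤ) (k : ℤ)
    (A : Matrix ι ι ℂ) : Matrix ι ι ℂ :=
  Matrix.of fun i j => if c i - c j = k then A i j else 0

/-- The trace norm `‖A‖₁ = tr √(A†A)`. -/
noncomputable def traceNorm {ι : Type*} [Fintype ι] [DecidableEq ι]
    (A : Matrix ι ι ℂ) : ℝ :=
  (((Matrix.posSemidef_conjTranspose_mul_self A).1.eigenvectorUnitary.1 *
      Matrix.diagonal (((↑) : ℝ → ℂ) ∘ (√·) ∘ (Matrix.posSemidef_conjTranspose_mul_self A).1.eigenvalues) *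
      (star (Matrix.posSemidef_conjTranspose_mul_self A).1.eigenvectorUnitary : Matrix ι ι ℂ)).trace).re

/-- The Choi matrix of a linear superoperator. -/
noncomputable def choi {ι κ : Type*} [Fintype ι] [DecidableEq ι] [Fintype κ]
    (E : Matrix ι ι ℂ →ₗ[ℂ] Matrix κ κ ℂ) : Matrix (ι × κ) (ι × κ) ℂ :=
  Matrix.of fun p q => E (Matrix.single p.1 q.1 1) p.2 q.2

/-- A quantum channel: completely positive (positive semidefinite Choi matrix)
and trace preserving. -/
def IsCPTP {ι κ : Type*} [Fintype ι] [DecidableEq ι] [Fintype κ]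
    (E : Matrix ι ι ℂ →ₗ[ℂ] Matrix κ κ ℂ) : Prop :=
  (choi E).PosSemidef ∧ ∀ A : Matrix ι ι ℂ, (E A).trace = A.trace

/-- U(1)-covariance of a superoperator with respect to input charges `c`
and output charges `d`. -/
def IsCovariant {ι κ : Type*} [Fintype ι] [DecidableEq ι] [Fintype κ] [DecidableEq κ]
    (c : ι → ℤ) (d : κ → ℤ) (E : Matrix ι ι ℂ →ₗ[ℂ] Matrix κ κ ℂ) : Prop :=
  ∀ (θ : ℝ) (X : Matrix ι ι ℂ),
    E (Urep c θ * X * (Urep c θ)ᴴ) = Urep d θ * E X * (Urep d θ)ᴴ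

/-- A density operator (quantum state). -/
def IsDensity {ι : Type*} [Fintype ι] (ρ : Matrix ι ι ℂ) : Prop :=
  ρ.PosSemidef ∧ ρ.trace = 1

/-- Cancellation of distinct Fourier characters. -/
lemma key_cancel {m n : ℤ} (h : m ≠ n) {z : ℂ}
    (hz : ∀ θ : ℝ, Complex.exp (Complex.I * (m : ℂ) * (θ : ℂ)) * z =
      Complex.exp (Complex.I * (n : ℂ) * (θ : ℂ)) * z) :
    z = 0 := by
  by_contra hzne
  have hmn : ((m : ℝ) - n) ≠ 0 := sub_ne_zero.mpr (by exact_mod_cast h)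
  set θ : ℝ := Real.pi / ((m : ℝ) - n) with hθ
  have h2 : Complex.exp (Complex.I * (m : ℂ) * θ) = Complex.exp (Complex.I * (n : ℂ) * θ) :=
    mul_right_cancel₀ hzne (hz θ)
  have h3 : Complex.exp (Complex.I * (m : ℂ) * θ - Complex.I * (n : ℂ) * θ) = 1 := by
    rw [Complex.exp_sub, h2, div_self (Complex.exp_ne_zero _)]
  have h4 : Complex.I * (m : ℂ) * θ - Complex.I * (n : ℂ) * θ = Real.pi * Complex.I := by
    have hθC : (θ : ℂ) = (Real.pi : ℂ) / ((m : ℂ) - n) := by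
      rw [hθ]; push_cast; ring
    have hmnC : ((m : ℂ) - n) ≠ 0 := by exact_mod_cast (by exact_mod_cast hmn : ((m:ℂ) - n ≠ 0))
    rw [hθC]
    field_simp
  rw [h4, Complex.exp_pi_mul_I] at h3
  norm_num at h3

lemma phase_star (x : ℝ) (n : ℤ) :
    star (Complex.exp (Complex.I * (n : ℂ) * (x : ℂ))) =
      Complex.exp (-(Complex.I * (n : ℂ) * (x : ℂ))) := by
  have : -(Complex.I * (n : ℂ) * (x : ℂ)) =
      (starRingEnd ℂ) (Complex.I * (n : ℂ) * (x : ℂ)) := by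
    simp only [_root_.map_mul, Complex.conj_I, Complex.conj_ofReal, map_intCast]
    ring
  rw [this, Complex.exp_conj]
  rfl

/-- Conjugation by `Urep` acts on a standard basis matrix by a phase. -/
lemma urep_conj_std {ι : Type*} [Fintype ι] [DecidableEq ι] (c : ι → ℤ) (θ : ℝ) (i j : ι) :
    Urep c θ * Matrix.single i j (1 : ℂ) * (Urep c θ)ᴴ =
      Complex.exp (Complex.I * ((c i - c j : ℤ) : ℂ) * (θ : ℂ)) •
        Matrix.single i j (1 : ℂ) := by
  ext a b
  simp only [Urep, Matrix.diagonal_conjTranspose, Matrix.mul_diagonal, Matrix.diagonal_mul,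
    Matrix.smul_apply, Matrix.single, Matrix.of_apply, smul_eq_mul, Pi.star_apply,
    mul_ite, ite_mul, mul_one, mul_zero, zero_mul]
  by_cases h : i = a ∧ j = b
  · obtain ⟨ha, hb⟩ := h
    subst ha; subst hb
    simp only [and_self, if_true]
    rw [phase_star, ← Complex.exp_add]
    congr 1
    push_cast
    ring
  · rw [if_neg h, if_neg h]

/-- Entries of `E (stdBasisMatrix i j 1)` in the wrong mode vanish. -/
lemma cov_std_entry {ι κ : Type*} [Fintype ι] [DecidableEq ι] [Fintype κ] [DecidableEq κ]
    (c : ι → ℤ) (d : κ → ℤ) (E : Matrix ι ι ℂ →ₗ[ℂ] Matrix κ κ ℂ)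
    (hcov : IsCovariant c d E) (i : ι) (j : ι) (a : κ) (b : κ)
    (hne : c i - c j ≠ d a - d b) :
    E (Matrix.single i j (1 : ℂ)) a b = 0 := by
  apply key_cancel hne
  intro θ
  have h := hcov θ (Matrix.single i j (1 : ℂ))
  rw [urep_conj_std, LinearMap.map_smul] at h
  have h2 := congrFun (congrFun h a) b
  simp only [Matrix.smul_apply, smul_eq_mul, Urep, Matrix.diagonal_conjTranspose,
    Matrix.mul_diagonal, Matrix.diagonal_mul, Pi.star_apply] at h2
  rw [h2, phase_star, mul_right_comm, ← Complex.exp_add]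
  congr 2
  push_cast
  ring

/-- if a U(1)-covariant channel transforms ρ into σ, then
`Modes(σ) ⊆ Modes(ρ)`, where `Modes(ρ) = {k : ρ^(k) ≠ 0}`. -/
theorem stmt_6 {ι κ : Type*} [Fintype ι] [DecidableEq ι] [Fintype κ] [DecidableEq κ]
    (c : ι → ℤ) (d : κ → ℤ)
    (E : Matrix ι ι ℂ →ₗ[ℂ] Matrix κ κ ℂ)
    (hCPTP : IsCPTP E) (hcov : IsCovariant c d E)
    (ρ : Matrix ι ι ℂ) (hρ : IsDensity ρ)
    (σ : Matrix κ κ ℂ) (hσ : E ρ = σ) :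
    {k : ℤ | modeComp d k σ ≠ 0} ⊆ {k : ℤ | modeComp c k ρ ≠ 0} := by
  intro k hk
  simp only [Set.mem_setOf_eq] at hk ⊢
  intro hρk
  apply hk
  ext a b
  simp only [modeComp, Matrix.of_apply, Matrix.zero_apply]
  by_cases hab : d a - d b = k
  · simp only [hab, if_true]
    rw [← hσ]
    have hρeq : ρ = ∑ i : ι, ∑ j : ι, ρ i j • Matrix.single i j (1 : ℂ) := by
      ext i j
      simp only [Matrix.sum_apply, Matrix.smul_apply, Matrix.single,
        Matrix.of_apply, smul_eq_mul, mul_ite, mul_one, mul_zero]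
      symm
      rw [Finset.sum_eq_single i (fun x _ hx => by
        simp only [ite_and, if_neg hx, Finset.sum_const_zero]) (fun h => absurd (Finset.mem_univ i) h)]
      rw [Finset.sum_eq_single j (fun y _ hy => by simp [hy])
        (fun h => absurd (Finset.mem_univ j) h)]
      simp
    rw [hρeq, map_sum]
    simp only [map_sum, _root_.map_smul]
    rw [Matrix.sum_apply]
    apply Finset.sum_eq_zero
    intro i _
    rw [Matrix.sum_apply]
    apply Finset.sum_eq_zero
    intro j _
    simp only [Matrix.smul_apply, smul_eq_mul]
    by_cases hij : c i - c j = k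
    · have hz : modeComp c k ρ i j = 0 := by rw [hρk]; rfl
      simp only [modeComp, Matrix.of_apply, hij, if_true] at hz
      simp [hz]
    · rw [cov_std_entry c d E hcov i j a b (by rw [hab]; exact hij)]
      simp
  · simp [hab]
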